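/- In the quantum cohomology ring QH*(OG(n+1,2n+2)) presented as ℤ[τ_1,...,τ_n,q]/I, where I is generated by the relations τ_i² + 2Σ_{k=1}^{i−1}(−1)^k τ_{i+k}τ_{i−k} + (−1)^i τ_{2i} = 0 for 1 ≤ i ≤ n−1 (with τ_j = 0 for j > n) and τ_n² = q: for any strict partition λ with λ_1 < n, defining the class τ_λ by the Pfaffian Giambelli formulas, one has τ_n · τ_λ = τ_{(n,λ)}, and for λ with λ_1 = n, τ_n · τ_λ = τ_{λ∖(n)} · q. -/

import Mathlib

open MvPolynomial

variable (n : ℕ)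

/-- The polynomial ring `ℤ[τ_1,…,τ_n,q]`: variable `i < n` is `τ_{i+1}` and
variable `n` is `q`. -/
abbrev PolyRing (n : ℕ) : Type := MvPolynomial (Fin (n + 1)) ℤ

/-- The generator `τ_j` (as a polynomial), with `τ_0 = 1` and `τ_j = 0` for
`j < 0` or `j > n`. -/
noncomputable def tauGen (n : ℕ) (j : ℤ) : PolyRing n :=
  if j = 0 then 1
  else if h : 1 ≤ j ∧ j ≤ n then X ⟨j.toNat - 1, by omega⟩ else 0

/-- The variable `q`. -/
noncomputable def qGen (n : ℕ) : PolyRing n := X ⟨n, by omega⟩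

/-- The relation `τ_i² + 2 Σ_{k=1}^{i−1} (−1)^k τ_{i+k} τ_{i−k} + (−1)^i τ_{2i}`. -/
noncomputable def relation (n : ℕ) (i : ℕ) : PolyRing n :=
  tauGen n i ^ 2
    + 2 * ∑ k ∈ Finset.Icc 1 (i - 1),
        (-1 : PolyRing n) ^ k * tauGen n ((i : ℤ) + k) * tauGen n ((i : ℤ) - k)
    + (-1 : PolyRing n) ^ i * tauGen n (2 * (i : ℤ))

/-- The ideal generated by the relations for `1 ≤ i ≤ n−1` together with the
quantum relation `τ_n² − q`. -/
noncomputable def qhIdeal (n : ℕ) : Ideal (PolyRing n) :=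
  Ideal.span ((relation n '' Set.Icc 1 (n - 1)) ∪ {tauGen n n ^ 2 - qGen n})

/-- The quantum cohomology ring `QH^*(OG) = ℤ[τ_1,…,τ_n,q]/I`. -/
abbrev QH (n : ℕ) : Type := PolyRing n ⧸ qhIdeal n

/-- The special Schubert class `τ_j` in `QH^*(OG)`. -/
noncomputable def tau (n : ℕ) (j : ℤ) : QH n := Ideal.Quotient.mk _ (tauGen n j)

/-- The class `q` in `QH^*(OG)`. -/
noncomputable def qCl (n : ℕ) : QH n := Ideal.Quotient.mk _ (qGen n)

/-- The two-condition class
`τ_{i,j} = τ_i τ_j + 2 Σ_{k=1}^{j−1} (−1)^k τ_{i+k} τ_{j−k} + (−1)^j τ_{i+j}`,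
with `τ_{i,0} = τ_i` and vanishing for negative indices. -/
noncomputable def tauTwo (n : ℕ) (i j : ℤ) : QH n :=
  if i < 0 ∨ j < 0 then 0
  else if j = 0 then tau n i
  else tau n i * tau n j
    + 2 * ∑ k ∈ Finset.Icc 1 (j.toNat - 1),
        (-1 : QH n) ^ k * tau n (i + k) * tau n (j - k)
    + (-1 : QH n) ^ j.toNat * tau n (i + j)

/-- The Schubert class `τ_λ` for a strict partition `λ`, defined by the
Pfaffian Giambelli formula
`τ_λ = Σ_{j=1}^{m-1} (−1)^{j−1} τ_{λ_j,λ_m} τ_{λ∖{λ_j,λ_m}}` (the partition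
being padded with a zero part to have even length `m`); fuel-based recursion
on the length of the list. -/
noncomputable def tauAux (n : ℕ) : ℕ → List ℤ → QH n
  | _, [] => 1
  | _, [a] => tau n a
  | _, [a, b] => tauTwo n a b
  | 0, _ => 1
  | fuel + 1, ν =>
      let μ := if ν.length % 2 = 0 then ν else ν ++ [0]
      let m := μ.length
      ∑ j ∈ Finset.range (m - 1),
        (-1 : QH n) ^ j * tauTwo n (μ.getD j 0) (μ.getD (m - 1) 0)
          * tauAux n fuel ((μ.eraseIdx (m - 1)).eraseIdx j)

noncomputable def tauCl (n : ℕ) (lam : List ℤ) : QH n := tauAux n lam.length lam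

/-- A strict partition, as a strictly decreasing list of positive integers. -/
def IsStrictPartition (l : List ℕ) : Prop := l.Pairwise (· > ·) ∧ ∀ x ∈ l, 0 < x

section Aux

lemma tau_zero : tau n 0 = 1 := by
  simp [tau, tauGen]

lemma tau_gt {j : ℤ} (h : (n : ℤ) < j) : tau n j = 0 := by
  unfold tau tauGen
  rw [if_neg (by omega), dif_neg (by omega), map_zero]

lemma tau_neg {j : ℤ} (h : j < 0) : tau n j = 0 := by
  unfold tau tauGen
  rw [if_neg (by omega), dif_neg (by omega), map_zero]

lemma tauTwo_zero (i : ℤ) : tauTwo n i 0 = tau n i := by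
  by_cases hi : i < 0
  · rw [tauTwo, if_pos (Or.inl hi), tau_neg n hi]
  · rw [tauTwo, if_neg (by omega), if_pos rfl]

lemma tauTwo_n (j : ℤ) : tauTwo n (n : ℤ) j = tau n (n : ℤ) * tau n j := by
  rcases lt_trichotomy j 0 with hj | hj | hj
  · rw [tauTwo, if_pos (Or.inr hj), tau_neg n hj, mul_zero]
  · subst hj; rw [tauTwo_zero, tau_zero, mul_one]
  · rw [tauTwo, if_neg (by omega), if_neg (by omega)]
    have h1 : ∑ k ∈ Finset.Icc 1 (j.toNat - 1),
        (-1 : QH n) ^ k * tau n ((n : ℤ) + k) * tau n (j - k) = 0 := by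
      apply Finset.sum_eq_zero
      intro k hk
      have hk1 : 1 ≤ k := (Finset.mem_Icc.mp hk).1
      rw [tau_gt n (by omega), mul_zero, zero_mul]
    rw [h1, tau_gt n (show (n : ℤ) < (n : ℤ) + j by omega)]
    ring

lemma tau_sq (hn : 1 ≤ n) : tau n (n : ℤ) * tau n (n : ℤ) = qCl n := by
  unfold tau qCl
  rw [← map_mul, Ideal.Quotient.eq]
  have : tauGen n (n : ℤ) * tauGen n (n : ℤ) - qGen n = tauGen n (n : ℤ) ^ 2 - qGen n := by
    ring
  rw [this]
  exact Ideal.subset_span (Set.mem_union_right _ rfl)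

lemma tauAux_nil (f : ℕ) : tauAux n f [] = 1 := by cases f <;> rfl
lemma tauAux_one (f : ℕ) (a : ℤ) : tauAux n f [a] = tau n a := by cases f <;> rfl
lemma tauAux_two (f : ℕ) (a b : ℤ) : tauAux n f [a, b] = tauTwo n a b := by cases f <;> rfl

lemma tauCl_nil : tauCl n [] = 1 := tauAux_nil n 0
lemma tauCl_one (a : ℤ) : tauCl n [a] = tau n a := tauAux_one n 1 a
lemma tauCl_two (a b : ℤ) : tauCl n [a, b] = tauTwo n a b := tauAux_two n 2 a b

lemma eraseIdx_eraseIdx {α : Type*} :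
    ∀ (l : List α) (k j : ℕ), k ≤ j →
      (l.eraseIdx (j + 1)).eraseIdx k = (l.eraseIdx k).eraseIdx j := by
  intro l
  induction l with
  | nil => intro k j _; simp
  | cons x t ih =>
    intro k j hkj
    cases k with
    | zero => simp [List.eraseIdx_cons_succ, List.eraseIdx_cons_zero]
    | succ k' =>
      obtain ⟨j', rfl⟩ : ∃ j', j = j' + 1 := ⟨j - 1, by omega⟩
      simp only [List.eraseIdx_cons_succ]
      rw [ih k' j' (by omega)]

lemma length_eraseIdx' {α : Type*} (l : List α) (j : ℕ) (h : j < l.length) :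
    (l.eraseIdx j).length = l.length - 1 := by
  rw [List.length_eraseIdx, if_pos h]

end Aux
section Expand

lemma tauAux_succ (f : ℕ) (l : List ℤ) (h3 : 3 ≤ l.length) :
    tauAux n (f + 1) l =
      ∑ j ∈ Finset.range ((if l.length % 2 = 0 then l else l ++ [0]).length - 1),
        (-1 : QH n) ^ j
          * tauTwo n ((if l.length % 2 = 0 then l else l ++ [0]).getD j 0)
              ((if l.length % 2 = 0 then l else l ++ [0]).getD
                ((if l.length % 2 = 0 then l else l ++ [0]).length - 1) 0)
          * tauAux n f
              (((if l.length % 2 = 0 then l else l ++ [0]).eraseIdx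
                  ((if l.length % 2 = 0 then l else l ++ [0]).length - 1)).eraseIdx j) := by
  match l, h3 with
  | a :: b :: c :: t, _ => rfl

lemma tauAux_succ_even (f : ℕ) (l : List ℤ) (h3 : 3 ≤ l.length) (he : l.length % 2 = 0) :
    tauAux n (f + 1) l =
      ∑ j ∈ Finset.range (l.length - 1),
        (-1 : QH n) ^ j * tauTwo n (l.getD j 0) (l.getD (l.length - 1) 0)
          * tauAux n f ((l.eraseIdx (l.length - 1)).eraseIdx j) := by
  rw [tauAux_succ n f l h3]
  simp only [if_pos he]

lemma getD_append_last (l : List ℤ) (b : ℤ) : (l ++ [b]).getD l.length 0 = b := by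
  rw [List.getD_eq_getElem _ _ (by simp), List.getElem_append_right (le_refl _)]
  simp

lemma eraseIdx_append_last (l : List ℤ) (b : ℤ) : (l ++ [b]).eraseIdx l.length = l := by
  rw [List.eraseIdx_append_of_length_le (le_refl _)]
  simp

lemma tauAux_succ_odd (f : ℕ) (l : List ℤ) (h3 : 3 ≤ l.length) (ho : l.length % 2 = 1) :
    tauAux n (f + 1) l =
      ∑ j ∈ Finset.range l.length,
        (-1 : QH n) ^ j * tau n (l.getD j 0) * tauAux n f (l.eraseIdx j) := by
  rw [tauAux_succ n f l h3]
  simp only [if_neg (by omega : ¬ l.length % 2 = 0)]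
  have hlen : (l ++ [0]).length = l.length + 1 := by simp
  rw [hlen]
  simp only [Nat.add_sub_cancel]
  apply Finset.sum_congr rfl
  intro j hj
  have hj' : j < l.length := Finset.mem_range.mp hj
  rw [getD_append_last, eraseIdx_append_last, tauTwo_zero,
    List.getD_append _ _ _ _ hj']

lemma tauAux_congr (L : ℕ) : ∀ (f₁ f₂ : ℕ) (l : List ℤ), l.length ≤ L →
    l.length ≤ f₁ + 2 → l.length ≤ f₂ + 2 → tauAux n f₁ l = tauAux n f₂ l := by
  induction L with
  | zero =>
    intro f₁ f₂ l hL _ _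
    have : l = [] := List.length_eq_zero_iff.mp (by omega)
    subst this
    rw [tauAux_nil, tauAux_nil]
  | succ L ih =>
    intro f₁ f₂ l hL h1 h2
    match l with
    | [] => rw [tauAux_nil, tauAux_nil]
    | [a] => rw [tauAux_one, tauAux_one]
    | [a, b] => rw [tauAux_two, tauAux_two]
    | a :: b :: c :: t =>
      set l : List ℤ := a :: b :: c :: t with hl
      have h3 : 3 ≤ l.length := by simp [hl]
      have hf1 : ∃ g, f₁ = g + 1 := ⟨f₁ - 1, by simp [hl] at h1; omega⟩
      have hf2 : ∃ g, f₂ = g + 1 := ⟨f₂ - 1, by simp [hl] at h2; omega⟩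
      obtain ⟨g₁, rfl⟩ := hf1
      obtain ⟨g₂, rfl⟩ := hf2
      rcases Nat.even_or_odd l.length with he | ho
      · have he' : l.length % 2 = 0 := Nat.even_iff.mp he
        rw [tauAux_succ_even n g₁ l h3 he', tauAux_succ_even n g₂ l h3 he']
        apply Finset.sum_congr rfl
        intro j hj
        have hj' : j < l.length - 1 := Finset.mem_range.mp hj
        have e1 : (l.eraseIdx (l.length - 1)).length = l.length - 1 :=
          length_eraseIdx' _ _ (by omega)
        have hlen : ((l.eraseIdx (l.length - 1)).eraseIdx j).length = l.length - 2 := by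
          rw [length_eraseIdx' _ _ (by rw [e1]; omega), e1]
          omega
        congr 1
        apply ih
        · omega
        · omega
        · omega
      · have ho' : l.length % 2 = 1 := Nat.odd_iff.mp ho
        rw [tauAux_succ_odd n g₁ l h3 ho', tauAux_succ_odd n g₂ l h3 ho']
        apply Finset.sum_congr rfl
        intro j hj
        have hj' : j < l.length := Finset.mem_range.mp hj
        have hlen : (l.eraseIdx j).length = l.length - 1 := length_eraseIdx' _ _ hj'
        congr 1
        apply ih <;> omega

lemma tauAux_eq_tauCl (f : ℕ) (l : List ℤ) (h : l.length ≤ f + 2) :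
    tauAux n f l = tauCl n l :=
  tauAux_congr n l.length f l.length l le_rfl h (by omega)

lemma expand_odd (l : List ℤ) (ho : l.length % 2 = 1) :
    tauCl n l = ∑ j ∈ Finset.range l.length,
      (-1 : QH n) ^ j * tau n (l.getD j 0) * tauCl n (l.eraseIdx j) := by
  rcases Nat.lt_or_ge l.length 3 with h3 | h3
  · -- length = 1
    have h1 : l.length = 1 := by omega
    match l, h1 with
    | [a], _ =>
      simp [tauCl_one, tauCl_nil]
  · show tauAux n l.length l = _
    obtain ⟨g, hg⟩ : ∃ g, l.length = g + 1 := ⟨l.length - 1, by omega⟩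
    rw [hg, tauAux_succ_odd n g l (by omega) ho]
    rw [← hg]
    apply Finset.sum_congr rfl
    intro j hj
    have hj' : j < l.length := Finset.mem_range.mp hj
    rw [tauAux_eq_tauCl n g (l.eraseIdx j) (by rw [length_eraseIdx' _ _ hj']; omega)]

lemma expand_even (l : List ℤ) (h0 : l ≠ []) (he : l.length % 2 = 0) :
    tauCl n l = ∑ j ∈ Finset.range (l.length - 1),
      (-1 : QH n) ^ j * tauTwo n (l.getD j 0) (l.getD (l.length - 1) 0)
        * tauCl n ((l.eraseIdx (l.length - 1)).eraseIdx j) := by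
  rcases Nat.lt_or_ge l.length 3 with h3 | h3
  · have h1 : l.length = 2 := by
      have : l.length ≠ 0 := by simpa using h0
      omega
    match l, h1 with
    | [a, b], _ =>
      simp [tauCl_two, tauCl_nil]
  · show tauAux n l.length l = _
    obtain ⟨g, hg⟩ : ∃ g, l.length = g + 1 := ⟨l.length - 1, by omega⟩
    rw [hg, tauAux_succ_even n g l (by omega) he]
    rw [← hg]
    apply Finset.sum_congr rfl
    intro j hj
    have hj' : j < l.length - 1 := Finset.mem_range.mp hj
    rw [tauAux_eq_tauCl n g _ ?_]
    rw [length_eraseIdx' _ _ (by rw [length_eraseIdx' _ _ (by omega)]; omega),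
      length_eraseIdx' _ _ (by omega)]
    omega

end Expand
section DS

/-- The involution swapping the two indices in the double sum. -/
def swapIdx (p : ℕ × ℕ) : ℕ × ℕ :=
  if p.2 < p.1 then (p.2, p.1 - 1) else (p.2 + 1, p.1)

lemma double_sum_cancel (w : ℤ → ℤ → QH n) (hw : ∀ x y, w x y = w y x)
    (F : List ℤ → QH n) (ν : List ℤ) :
    ∑ p ∈ Finset.range ν.length ×ˢ Finset.range (ν.length - 1),
      (-1 : QH n) ^ (p.1 + p.2) * w (ν.getD p.1 0) ((ν.eraseIdx p.1).getD p.2 0)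
        * F ((ν.eraseIdx p.1).eraseIdx p.2) = 0 := by
  apply Finset.sum_involution (fun p _ => swapIdx p)
  · -- cancellation
    rintro ⟨j, k⟩ hp
    simp only [Finset.mem_product, Finset.mem_range] at hp
    obtain ⟨hj, hk⟩ := hp
    by_cases hkj : k < j
    · obtain ⟨j', rfl⟩ : ∃ j', j = j' + 1 := ⟨j - 1, by omega⟩
      simp only [swapIdx, if_pos hkj, Nat.add_sub_cancel]
      have hkν : k < ν.length := by omega
      have g1 : (ν.eraseIdx (j' + 1)).getD k 0 = ν.getD k 0 := by
        rw [List.getD_eq_getElem _ _ (by rw [length_eraseIdx' _ _ hj]; omega),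
          List.getElem_eraseIdx, dif_pos hkj, List.getD_eq_getElem _ _ hkν]
      have g2 : (ν.eraseIdx k).getD j' 0 = ν.getD (j' + 1) 0 := by
        rw [List.getD_eq_getElem _ _ (by rw [length_eraseIdx' _ _ hkν]; omega),
          List.getElem_eraseIdx, dif_neg (by omega : ¬ j' < k),
          List.getD_eq_getElem _ _ hj]
      have g3 : (ν.eraseIdx k).eraseIdx j' = (ν.eraseIdx (j' + 1)).eraseIdx k :=
        (eraseIdx_eraseIdx ν k j' (by omega)).symm
      rw [g1, g2, g3, hw]
      have hsign : (-1 : QH n) ^ (j' + 1 + k) = -(-1 : QH n) ^ (k + j') := by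
        rw [show j' + 1 + k = (k + j') + 1 from by omega, pow_succ]
        ring
      rw [hsign]
      ring
    · simp only [swapIdx, if_neg hkj]
      have hk1 : k + 1 < ν.length := by omega
      have g1 : (ν.eraseIdx j).getD k 0 = ν.getD (k + 1) 0 := by
        rw [List.getD_eq_getElem _ _ (by rw [length_eraseIdx' _ _ hj]; omega),
          List.getElem_eraseIdx, dif_neg hkj, List.getD_eq_getElem _ _ hk1]
      have g2 : (ν.eraseIdx (k + 1)).getD j 0 = ν.getD j 0 := by
        rw [List.getD_eq_getElem _ _ (by rw [length_eraseIdx' _ _ hk1]; omega),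
          List.getElem_eraseIdx, dif_pos (by omega : j < k + 1),
          List.getD_eq_getElem _ _ hj]
      have g3 : (ν.eraseIdx (k + 1)).eraseIdx j = (ν.eraseIdx j).eraseIdx k :=
        eraseIdx_eraseIdx ν j k (by omega)
      rw [g1, g2, g3, hw]
      have hsign : (-1 : QH n) ^ (k + 1 + j) = -(-1 : QH n) ^ (j + k) := by
        rw [show k + 1 + j = (j + k) + 1 from by omega, pow_succ]
        ring
      rw [hsign]
      ring
  · -- no fixed points
    rintro ⟨j, k⟩ _ _
    simp only [swapIdx]
    split <;> (intro h; rw [Prod.mk.injEq] at h; omega)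
  · -- maps into the set
    rintro ⟨j, k⟩ hp
    simp only [Finset.mem_product, Finset.mem_range] at hp
    simp only [swapIdx]
    split <;> (simp only [Finset.mem_product, Finset.mem_range]; omega)
  · -- involution
    rintro ⟨j, k⟩ hp
    simp only [Finset.mem_product, Finset.mem_range] at hp
    by_cases hkj : k < j
    · simp only [swapIdx, if_pos hkj, if_neg (show ¬ j - 1 < k by omega),
        Prod.mk.injEq, and_true, true_and]
      omega
    · simp only [swapIdx, if_neg hkj, if_pos (show j < k + 1 by omega),
        Prod.mk.injEq, and_true, true_and]
      omega

end DS
section Cancel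

lemma sum_alt_erase (ν : List ℤ) (he : ν.length % 2 = 0) :
    ∑ j ∈ Finset.range ν.length,
      (-1 : QH n) ^ j * tau n (ν.getD j 0) * tauCl n (ν.eraseIdx j) = 0 := by
  rcases Nat.eq_zero_or_pos ν.length with h0 | h0
  · rw [h0]; simp
  · have h2 : 2 ≤ ν.length := by omega
    have key : ∀ j < ν.length, tauCl n (ν.eraseIdx j) =
        ∑ k ∈ Finset.range (ν.length - 1),
          (-1 : QH n) ^ k * tau n ((ν.eraseIdx j).getD k 0)
            * tauCl n ((ν.eraseIdx j).eraseIdx k) := by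
      intro j hj
      have h := expand_odd n (ν.eraseIdx j) (by rw [length_eraseIdx' _ _ hj]; omega)
      rwa [length_eraseIdx' _ _ hj] at h
    have main := double_sum_cancel n (fun x y => tau n x * tau n y)
      (fun x y => mul_comm _ _) (tauCl n) ν
    rw [Finset.sum_product] at main
    refine Eq.trans ?_ main
    apply Finset.sum_congr rfl
    intro j hj
    rw [key j (Finset.mem_range.mp hj), Finset.mul_sum]
    apply Finset.sum_congr rfl
    intro k _
    rw [pow_add]
    ring

lemma sum_alt_pair (ν : List ℤ) (b : ℤ) (he : ν.length % 2 = 0) :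
    ∑ j ∈ Finset.range ν.length,
      (-1 : QH n) ^ j *
        (tau n (ν.getD j 0) * tauCl n (ν.eraseIdx j ++ [b])
          + tauTwo n (ν.getD j 0) b * tauCl n (ν.eraseIdx j)) = 0 := by
  rcases Nat.eq_zero_or_pos ν.length with h0 | h0
  · rw [h0]; simp
  · have h2 : 2 ≤ ν.length := by omega
    have key2 : ∀ j < ν.length, tauCl n (ν.eraseIdx j) =
        ∑ k ∈ Finset.range (ν.length - 1),
          (-1 : QH n) ^ k * tau n ((ν.eraseIdx j).getD k 0)
            * tauCl n ((ν.eraseIdx j).eraseIdx k) := by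
      intro j hj
      have h := expand_odd n (ν.eraseIdx j) (by rw [length_eraseIdx' _ _ hj]; omega)
      rwa [length_eraseIdx' _ _ hj] at h
    have key1 : ∀ j < ν.length, tauCl n (ν.eraseIdx j ++ [b]) =
        ∑ k ∈ Finset.range (ν.length - 1),
          (-1 : QH n) ^ k * tauTwo n ((ν.eraseIdx j).getD k 0) b
            * tauCl n ((ν.eraseIdx j).eraseIdx k) := by
      intro j hj
      have hte : (ν.eraseIdx j).length = ν.length - 1 := length_eraseIdx' _ _ hj
      have h := expand_even n (ν.eraseIdx j ++ [b]) (by simp)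
        (by rw [List.length_append, List.length_cons, List.length_nil, hte]; omega)
      rw [List.length_append, List.length_cons, List.length_nil,
        Nat.add_sub_cancel, getD_append_last, eraseIdx_append_last, hte] at h
      rw [h]
      apply Finset.sum_congr rfl
      intro k hk
      have hk' : k < ν.length - 1 := Finset.mem_range.mp hk
      rw [List.getD_append _ _ _ _ (by rw [hte]; omega)]
    have main := double_sum_cancel n
      (fun x y => tau n x * tauTwo n y b + tauTwo n x b * tau n y)
      (fun x y => by ring) (tauCl n) ν
    rw [Finset.sum_product] at main
    refine Eq.trans ?_ main
    apply Finset.sum_congr rfl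
    intro j hj
    rw [key1 j (Finset.mem_range.mp hj), key2 j (Finset.mem_range.mp hj),
      Finset.mul_sum, Finset.mul_sum, ← Finset.sum_add_distrib, Finset.mul_sum]
    apply Finset.sum_congr rfl
    intro k _
    rw [pow_add]
    ring

end Cancel
section Main

lemma tau_mul_tauCl : ∀ (L : ℕ) (l : List ℤ), l.length ≤ L →
    tau n (n : ℤ) * tauCl n l = tauCl n ((n : ℤ) :: l) := by
  intro L
  induction L with
  | zero =>
    intro l hL
    have : l = [] := List.length_eq_zero_iff.mp (by omega)
    subst this
    rw [tauCl_nil, tauCl_one, mul_one]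
  | succ L ih =>
    intro l hL
    rcases l with _ | ⟨a, t⟩
    · rw [tauCl_nil, tauCl_one, mul_one]
    set l : List ℤ := a :: t with hl
    have hM : 1 ≤ l.length := by simp [hl]
    rcases Nat.even_or_odd l.length with he | ho
    · -- even length
      have he' : l.length % 2 = 0 := Nat.even_iff.mp he
      have hodd : ((n : ℤ) :: l).length % 2 = 1 := by
        rw [List.length_cons]; omega
      rw [expand_odd n ((n : ℤ) :: l) hodd, List.length_cons,
        Finset.sum_range_succ']
      simp only [List.getD_cons_succ, List.getD_cons_zero,
        List.eraseIdx_cons_succ, List.eraseIdx_cons_zero, pow_zero, one_mul]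
      rw [Finset.sum_congr rfl (fun i hi => by
        rw [← ih (l.eraseIdx i)
          (by rw [length_eraseIdx' _ _ (Finset.mem_range.mp hi)]; omega)])]
      have hz := sum_alt_erase n l he'
      have hs : ∑ i ∈ Finset.range l.length,
          (-1 : QH n) ^ (i + 1) * tau n (l.getD i 0)
            * (tau n (n : ℤ) * tauCl n (l.eraseIdx i))
          = -(tau n (n : ℤ) * ∑ i ∈ Finset.range l.length,
              (-1 : QH n) ^ i * tau n (l.getD i 0) * tauCl n (l.eraseIdx i)) := by
        rw [Finset.mul_sum, ← Finset.sum_neg_distrib]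
        apply Finset.sum_congr rfl
        intro i _
        rw [pow_succ]
        ring
      rw [hs, hz, mul_zero, neg_zero, zero_add]
    · -- odd length
      have hne : l ≠ [] := by simp [hl]
      obtain ⟨ν, b, hnb⟩ : ∃ ν b, l = ν ++ [b] :=
        ⟨l.dropLast, l.getLast hne, (List.dropLast_append_getLast hne).symm⟩
      rw [hnb] at ho hL ⊢
      clear hnb hM hl hne
      have hs : (ν ++ [b]).length = ν.length + 1 := by simp
      have hse : ν.length % 2 = 0 := by
        have ho2 : (ν.length + 1) % 2 = 1 := by rw [← hs]; exact Nat.odd_iff.mp ho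
        omega
      have hsL : ν.length ≤ L := by rw [hs] at hL; omega
      -- expand the RHS
      have heven : ((n : ℤ) :: (ν ++ [b])).length % 2 = 0 := by
        rw [List.length_cons, hs]; omega
      rw [expand_even n ((n : ℤ) :: (ν ++ [b])) (by simp) heven]
      have hlen : ((n : ℤ) :: (ν ++ [b])).length = ν.length + 2 := by simp
      rw [hlen]
      have hidx : ν.length + 2 - 1 = ν.length + 1 := by omega
      rw [hidx]
      have hgetlast : ((n : ℤ) :: (ν ++ [b])).getD (ν.length + 1) 0 = b := by
        rw [List.getD_cons_succ, getD_append_last]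
      have herase : ((n : ℤ) :: (ν ++ [b])).eraseIdx (ν.length + 1)
          = (n : ℤ) :: ν := by
        rw [List.eraseIdx_cons_succ, eraseIdx_append_last]
      rw [hgetlast, herase, Finset.sum_range_succ']
      simp only [List.getD_cons_succ, List.getD_cons_zero,
        List.eraseIdx_cons_succ, List.eraseIdx_cons_zero, pow_zero, one_mul]
      -- j = 0 term
      rw [tauTwo_n]
      -- other terms: getD of append and IH
      rw [Finset.sum_congr rfl (fun i hi => by
        rw [List.getD_append _ _ _ _ (Finset.mem_range.mp hi),
          ← ih (ν.eraseIdx i)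
            (by rw [length_eraseIdx' _ _ (Finset.mem_range.mp hi)]; omega)])]
      -- expand the LHS
      have hol : (ν ++ [b]).length % 2 = 1 := by rw [hs]; omega
      rw [expand_odd n (ν ++ [b]) hol, hs, Finset.sum_range_succ,
        getD_append_last, eraseIdx_append_last]
      rw [Finset.sum_congr rfl (fun j hj => by
        rw [List.getD_append _ _ _ _ (Finset.mem_range.mp hj),
          List.eraseIdx_append_of_lt_length (Finset.mem_range.mp hj)])]
      have hsign : (-1 : QH n) ^ ν.length = 1 := by
        obtain ⟨c, hc⟩ := Nat.even_iff.mpr hse |> fun h => (Nat.even_iff.mpr hse)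
        rw [hc, ← two_mul, pow_mul]
        norm_num
      rw [hsign, one_mul]
      -- final algebra
      have key := sum_alt_pair n ν b hse
      have split : ∑ j ∈ Finset.range ν.length,
            (-1 : QH n) ^ j *
              (tau n (ν.getD j 0) * tauCl n (ν.eraseIdx j ++ [b])
                + tauTwo n (ν.getD j 0) b * tauCl n (ν.eraseIdx j))
          = (∑ j ∈ Finset.range ν.length,
              (-1 : QH n) ^ j * tau n (ν.getD j 0) * tauCl n (ν.eraseIdx j ++ [b]))
            + ∑ j ∈ Finset.range ν.length,
              (-1 : QH n) ^ j * tauTwo n (ν.getD j 0) b * tauCl n (ν.eraseIdx j) := by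
        rw [← Finset.sum_add_distrib]
        apply Finset.sum_congr rfl
        intro j _
        ring
      rw [split] at key
      have hs2 : ∑ i ∈ Finset.range ν.length,
            (-1 : QH n) ^ (i + 1) * tauTwo n (ν.getD i 0) b
              * (tau n (n : ℤ) * tauCl n (ν.eraseIdx i))
          = -(tau n (n : ℤ) * ∑ j ∈ Finset.range ν.length,
              (-1 : QH n) ^ j * tauTwo n (ν.getD j 0) b * tauCl n (ν.eraseIdx j)) := by
        rw [Finset.mul_sum, ← Finset.sum_neg_distrib]
        apply Finset.sum_congr rfl
        intro i _
        rw [pow_succ]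
        ring
      rw [hs2]
      linear_combination (tau n (n : ℤ)) * key

end Main

/-- In `QH^*(OG(n+1,2n+2)) = ℤ[τ_1,…,τ_n,q]/I`: for a strict partition `λ`
with `λ_1 < n`, `τ_n · τ_λ = τ_{(n,λ)}`, while for `λ` with `λ_1 = n`,
`τ_n · τ_λ = τ_{λ∖(n)} · q`. -/
theorem statement17 (n : ℕ) (hn : 1 ≤ n) (lam : List ℕ)
    (hlam : IsStrictPartition lam) (hbd : ∀ x ∈ lam, x ≤ n) :
    (lam.headD 0 < n →
      tau n n * tauCl n (lam.map fun a => (a : ℤ))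
        = tauCl n ((n : ℤ) :: lam.map fun a => (a : ℤ)))
    ∧ (lam.headD 0 = n →
      tau n n * tauCl n (lam.map fun a => (a : ℤ))
        = tauCl n ((lam.map fun a => (a : ℤ)).tail) * qCl n) := by
  constructor
  · intro _
    exact tau_mul_tauCl n (lam.map fun a => (a : ℤ)).length _ le_rfl
  · intro hhead
    rcases lam with _ | ⟨a, rest⟩
    · rw [List.headD_nil] at hhead; omega
    · rw [List.headD_cons] at hhead
      have hsplit : ((a :: rest).map fun a => (a : ℤ))
          = (a : ℤ) :: (rest.map fun a => (a : ℤ)) := by simp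
      rw [hsplit, List.tail_cons,
        show ((a : ℤ)) = ((n : ℤ)) from by exact_mod_cast hhead,
        ← tau_mul_tauCl n (rest.map fun a => (a : ℤ)).length _ le_rfl,
        ← mul_assoc, tau_sq n hn]
      ring
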